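/- Let G be a prime graph whose complement is P5-free, and let u, v be non-adjacent vertices of G. Then either N(u) ∩ N(v) is a clique, or there exists a vertex w ∈ V(G)\(N(u) ∪ N(v) ∪ {u,v}) which is mixed on some anticonnected subset of N(u) ∩ N(v). -/

import Mathlib

open SimpleGraph

variable {V : Type*} {W : Type*}

/-- A vertex `v` is *mixed* on a set `X` if it has both a neighbor and a non-neighbor in `X`. -/
def Mixed (G : SimpleGraph V) (v : V) (X : Set V) : Prop :=
  (∃ x ∈ X, G.Adj v x) ∧ (∃ x ∈ X, ¬ G.Adj v x)

/-- A homogeneous set: `1 < |X| < |V(G)|` and no outside vertex is mixed on `X`. -/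
def IsHomogeneousSet [Fintype V] (G : SimpleGraph V) (X : Set V) : Prop :=
  1 < X.ncard ∧ X.ncard < Fintype.card V ∧ ∀ v ∉ X, ¬ Mixed G v X

/-- A graph is prime if it has at least four vertices and no homogeneous set. -/
def IsPrimeGraph [Fintype V] (G : SimpleGraph V) : Prop :=
  4 ≤ Fintype.card V ∧ ∀ X : Set V, ¬ IsHomogeneousSet G X

/-- A vertex is simplicial if its neighborhood is a clique. -/
def Simplicial (G : SimpleGraph V) (v : V) : Prop :=
  G.IsClique (G.neighborSet v)

/-- A vertex is antisimplicial if its non-neighborhood is a stable set. -/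
def Antisimplicial (G : SimpleGraph V) (v : V) : Prop :=
  Gᶜ.IsClique {u | ¬ G.Adj v u}

/-- `G` is `H`-free: there is no induced copy of `H` in `G`. -/
def HFree (H : SimpleGraph W) (G : SimpleGraph V) : Prop :=
  ¬ Nonempty (H ↪g G)

/-- Auxiliary: build a `P5` in the complement from the configuration
`q — p — x — v — u` (edges in `Gᶜ`). -/
lemma buildP5 (G : SimpleGraph V) {u v x p q : V}
    (hpu : G.Adj u p) (hpv : G.Adj v p) (hqu : G.Adj u q) (hqv : G.Adj v q)
    (hqp : Gᶜ.Adj q p) (hxp : ¬ G.Adj x p) (hxq : G.Adj x q) (hxnep : x ≠ p)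
    (hxu : G.Adj u x) (hxv : ¬ G.Adj v x) (huv : u ≠ v) (hnadj : ¬ G.Adj u v) :
    Nonempty (pathGraph 5 ↪g Gᶜ) := by
  have hqnep : q ≠ p := hqp.ne
  have hxq' : x ≠ q := hxq.ne
  have hvp : v ≠ p := hpv.ne
  have hvq : v ≠ q := hqv.ne
  have hvx : v ≠ x := fun h => hnadj (h ▸ hxu)
  have hup : u ≠ p := hpu.ne
  have huq : u ≠ q := hqu.ne
  have hux : u ≠ x := hxu.ne
  have hpq := hqp.symm
  refine ⟨⟨⟨![q, p, x, v, u], ?_⟩, ?_⟩⟩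
  · intro a b
    fin_cases a <;> fin_cases b <;>
      simp_all (config := {decide := true}) [G.adj_comm, eq_comm, ne_comm]
  · intro a b
    change Gᶜ.Adj (![q, p, x, v, u] a) (![q, p, x, v, u] b) ↔ _
    fin_cases a <;> fin_cases b <;>
      simp_all [pathGraph_adj, compl_adj, G.adj_comm, eq_comm, ne_comm] <;> decide

theorem stmt8 [Fintype V] (G : SimpleGraph V) (hprime : IsPrimeGraph G)
    (hfree : HFree (pathGraph 5) Gᶜ)
    (u v : V) (huv : u ≠ v) (hnadj : ¬ G.Adj u v) :
    G.IsClique (G.neighborSet u ∩ G.neighborSet v) ∨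
    ∃ w, w ∉ G.neighborSet u ∪ G.neighborSet v ∪ {u, v} ∧
      ∃ A : Set V, A ⊆ G.neighborSet u ∩ G.neighborSet v ∧
        ((G.induce A)ᶜ).Connected ∧ Mixed G w A := by
  by_contra hcon
  push_neg at hcon
  obtain ⟨hnc, hright⟩ := hcon
  set C : Set V := G.neighborSet u ∩ G.neighborSet v with hC
  -- a non-edge inside C
  rw [SimpleGraph.isClique_iff, Set.Pairwise] at hnc
  push_neg at hnc
  obtain ⟨a, ha, b, hb, hne, hnab⟩ := hnc
  -- the anticomponent of C containing a
  set R : V → V → Prop := fun s t => s ∈ C ∧ t ∈ C ∧ Gᶜ.Adj s t with hR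
  set A : Set V := {z | z ∈ C ∧ Relation.ReflTransGen R a z} with hAdef
  have haA : a ∈ A := ⟨ha, Relation.ReflTransGen.refl⟩
  have hbA : b ∈ A := ⟨hb, Relation.ReflTransGen.single ⟨ha, hb, (compl_adj G a b).2 ⟨hne, hnab⟩⟩⟩
  have hAC : A ⊆ C := fun z hz => hz.1
  have hclosure : ∀ z ∈ A, ∀ y ∈ C, Gᶜ.Adj z y → y ∈ A := by
    intro z hz y hy hadj
    exact ⟨hy, hz.2.tail ⟨hz.1, hy, hadj⟩⟩
  -- strengthened reachability: the relation restricted to A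
  set R' : V → V → Prop := fun s t => s ∈ A ∧ t ∈ A ∧ Gᶜ.Adj s t with hR'
  have reachA : ∀ z, Relation.ReflTransGen R a z → z ∈ A → Relation.ReflTransGen R' a z := by
    intro z hz
    induction hz with
    | refl => intro _; exact Relation.ReflTransGen.refl
    | @tail m t hm hmt ih =>
      intro htA
      have hmA : m ∈ A := ⟨hmt.1, hm⟩
      exact (ih hmA).tail ⟨hmA, htA, hmt.2.2⟩
  have hR'symm : Symmetric R' := fun s t h => ⟨h.2.1, h.1, h.2.2.symm⟩
  -- connectivity of the complement of the induced graph on A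
  have key' : ∀ z, Relation.ReflTransGen R' a z →
      ∀ hz : z ∈ A, ((G.induce A)ᶜ).Reachable ⟨a, haA⟩ ⟨z, hz⟩ := by
    intro z h
    induction h with
    | refl => intro _; exact Reachable.refl _
    | @tail m t hm hmt ih =>
      intro htA
      have hadj2 : ((G.induce A)ᶜ).Adj ⟨m, hmt.1⟩ ⟨t, htA⟩ := by
        rw [compl_adj]
        refine ⟨?_, fun hadj => ((compl_adj G m t).1 hmt.2.2).2 hadj⟩
        simp only [ne_eq, Subtype.mk.injEq]
        exact hmt.2.2.ne
      exact (ih hmt.1).trans hadj2.reachable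
  have key : ∀ z (hz : z ∈ A), ((G.induce A)ᶜ).Reachable ⟨a, haA⟩ ⟨z, hz⟩ :=
    fun z hz => key' z (reachA z hz.2 hz) hz
  have hConn : ((G.induce A)ᶜ).Connected := by
    haveI : Nonempty A := ⟨⟨a, haA⟩⟩
    exact ⟨fun x y => ((key x.1 x.2).symm.trans (key y.1 y.2))⟩
  -- A is not homogeneous, so some outside vertex is mixed on A
  have huC : u ∉ C := fun h => G.irrefl ((G.mem_neighborSet u u).1 h.1)
  have h1 : 1 < A.ncard := (Set.one_lt_ncard (Set.toFinite A)).2 ⟨a, haA, b, hbA, hne⟩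
  have h2 : A.ncard < Fintype.card V := by
    have hss : A ⊂ Set.univ :=
      Set.ssubset_univ_iff.2 ((Set.ne_univ_iff_exists_notMem A).2 ⟨u, fun h => huC (hAC h)⟩)
    have := Set.ncard_lt_ncard hss (Set.finite_univ)
    rwa [Set.ncard_univ, Nat.card_eq_fintype_card] at this
  have hhom := hprime.2 A
  rw [IsHomogeneousSet] at hhom
  push_neg at hhom
  obtain ⟨x, hxA, hmix⟩ := hhom h1 h2
  obtain ⟨⟨a', ha'A, hxa'⟩, ⟨b', hb'A, hxb'⟩⟩ := hmix
  -- x is not u or v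
  have hxu_ne : x ≠ u := fun h => hxb' (h ▸ (G.mem_neighborSet u b').1 (hAC hb'A).1)
  have hxv_ne : x ≠ v := fun h => hxb' (h ▸ (G.mem_neighborSet v b').1 (hAC hb'A).2)
  -- x is not in C
  have hxC : x ∉ C := by
    intro hxCmem
    apply hxA
    refine hclosure b' hb'A x hxCmem ?_
    rw [compl_adj]
    exact ⟨fun h => hxA (h ▸ hb'A), fun h => hxb' h.symm⟩
  -- find a crossing anticomplement edge
  have cross : ∀ s t, Relation.ReflTransGen R' s t → G.Adj x s → ¬G.Adj x t →
      ∃ p q, p ∈ A ∧ q ∈ A ∧ Gᶜ.Adj q p ∧ ¬G.Adj x p ∧ G.Adj x q := by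
    intro s t hst
    induction hst with
    | refl => intro h1 h2; exact absurd h1 h2
    | @tail m t hm hmt ih =>
      intro hs ht
      by_cases hxm : G.Adj x m
      · exact ⟨t, m, hmt.2.1, hmt.1, hmt.2.2, ht, hxm⟩
      · exact ih hs hxm
  have hpath : Relation.ReflTransGen R' a' b' :=
    ((have : Std.Symm R' := ⟨fun _ _ h => hR'symm h⟩; Relation.ReflTransGen.symmetric.symm _ _ (reachA a' ha'A.2 ha'A))).trans
      (reachA b' hb'A.2 hb'A)
  obtain ⟨p, q, hpA, hqA, hqp, hxp, hxq⟩ := cross a' b' hpath hxa' hxb'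
  have hxnep : x ≠ p := fun h => hxA (h ▸ hpA)
  have hpu : G.Adj u p := (G.mem_neighborSet u p).1 (hAC hpA).1
  have hpv : G.Adj v p := (G.mem_neighborSet v p).1 (hAC hpA).2
  have hqu : G.Adj u q := (G.mem_neighborSet u q).1 (hAC hqA).1
  have hqv : G.Adj v q := (G.mem_neighborSet v q).1 (hAC hqA).2
  by_cases hxu2 : G.Adj u x
  · have hxv2 : ¬ G.Adj v x := fun h => hxC ⟨(G.mem_neighborSet u x).2 hxu2,
      (G.mem_neighborSet v x).2 h⟩
    exact hfree (buildP5 G hpu hpv hqu hqv hqp hxp hxq hxnep hxu2 hxv2 huv hnadj)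
  · by_cases hxv2 : G.Adj v x
    · exact hfree (buildP5 G hpv hpu hqv hqu hqp hxp hxq hxnep hxv2 hxu2 huv.symm
        (fun h => hnadj h.symm))
    · refine hright x ?_ A hAC hConn ⟨⟨a', ha'A, hxa'⟩, ⟨b', hb'A, hxb'⟩⟩
      simp only [Set.mem_union, SimpleGraph.mem_neighborSet, Set.mem_insert_iff,
        Set.mem_singleton_iff]
      push_neg
      exact ⟨⟨hxu2, hxv2⟩, hxu_ne, hxv_ne⟩
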